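/- arXiv:1501.04526 — 2 statements merged into one kernel-verified Lean document; each statement's English description precedes it below -/
import Mathlib

section
/- Let W_p be the group scheme over Z whose underlying scheme is the affine plane and whose group law is (x,y)·(x',y') = (x + x', y + y' + ((x + x')^p − x^p − x'^p)/p) (the additive group of Witt vectors of length 2). For a commutative ring R, the base change W_p ×_Z R is isomorphic as an R-group scheme to G_a,R² if and only if p is invertible in R. Consequently, for distinct primes p and q the group schemes W_p and W_q over Z are not isomorphic, so there are infinitely many pairwise non-isomorphic smooth commutative unipotent group schemes of dimension 2 over Z. -/
noncomputable section

open MvPolynomial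

/-- The Witt group law of length-two Witt vectors on the affine plane:
`(x, y) · (x', y') = (x + x', y + y' + c(x, x'))`, where `c` is the integral polynomial
`((X + X')^p − X^p − X'^p) / p` (passed here as any polynomial `c` with
`p • c = (X + X')^p − X^p − X'^p`). -/
def wittMul (c : MvPolynomial (Fin 2) ℤ) (A : Type) [CommRing A] (v w : A × A) : A × A :=
  (v.1 + w.1,
    v.2 + w.2 + MvPolynomial.aeval (fun i : Fin 2 => if i = 0 then v.1 else w.1) c)

/-- An isomorphism over `R` between the two affine-plane group schemes with group laws
`m₁` and `m₂`, described via functors of points: a family of bijections of the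
`A`-points `A × A`, natural in the `R`-algebra `A` and respecting the group laws.
By the Yoneda lemma (both schemes being affine over `R`), this is the same as an
isomorphism of group schemes over `R`. -/
structure PlaneGrpIso (m₁ m₂ : ∀ (A : Type) [CommRing A], A × A → A × A → A × A)
    (R : Type) [CommRing R] where
  e : ∀ (A : Type) [CommRing A] [Algebra R A], A × A ≃ A × A
  e_mul : ∀ (A : Type) [CommRing A] [Algebra R A] (v w : A × A),
      e A (m₁ A v w) = m₂ A (e A v) (e A w)
  e_natural : ∀ (A A' : Type) [CommRing A] [CommRing A'] [Algebra R A] [Algebra R A']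
      (f : A →ₐ[R] A') (v : A × A),
      e A' (f v.1, f v.2) = (f (e A v).1, f (e A v).2)

/-- The data of a length-two Witt vector group scheme `W_p` over `ℤ`: a prime `p`
together with the polynomial `((X + X')^p − X^p − X'^p) / p` defining its group law. -/
def WittDatum : Type :=
  {pc : ℕ × MvPolynomial (Fin 2) ℤ //
    pc.1.Prime ∧ (pc.1 : ℤ) • pc.2 = (X 0 + X 1) ^ pc.1 - X 0 ^ pc.1 - X 1 ^ pc.1}

/-! ### Auxiliary machinery -/

/-- The `n`-fold product of `v` with itself for the group law `wittMul c`. -/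
def iterW (c : MvPolynomial (Fin 2) ℤ) (A : Type) [CommRing A] (v : A × A) : ℕ → A × A
  | 0 => (0, 0)
  | n + 1 => wittMul c A (iterW c A v n) v

lemma ringHom_aeval (c : MvPolynomial (Fin 2) ℤ) {B C : Type} [CommRing B] [CommRing C]
    (f : B →+* C) (g : Fin 2 → B) :
    f (MvPolynomial.aeval g c) = MvPolynomial.aeval (fun i => f (g i)) c := by
  rw [MvPolynomial.aeval_def, MvPolynomial.aeval_def, eval₂_comp_left f]
  congr 1
  exact Subsingleton.elim _ _

lemma ringHom_wittMul (c : MvPolynomial (Fin 2) ℤ) {B C : Type} [CommRing B] [CommRing C]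
    (f : B →+* C) (v w : B × B) :
    wittMul c C (f v.1, f v.2) (f w.1, f w.2)
      = (f (wittMul c B v w).1, f (wittMul c B v w).2) := by
  simp only [wittMul, map_add]
  refine Prod.ext rfl ?_
  simp only
  have h : (fun i : Fin 2 => if i = 0 then f v.1 else f w.1)
      = fun i => f (if i = 0 then v.1 else w.1) := by funext i; split <;> rfl
  rw [ringHom_aeval, ← h]

lemma ringHom_iterW (c : MvPolynomial (Fin 2) ℤ) {B C : Type} [CommRing B] [CommRing C]
    (f : B →+* C) (v : B × B) (n : ℕ) :
    iterW c C (f v.1, f v.2) n = (f (iterW c B v n).1, f (iterW c B v n).2) := by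
  induction n with
  | zero => simp [iterW]
  | succ n ih => rw [iterW, ih, ringHom_wittMul]; rfl

lemma cocycle_eval (p : ℕ) (c : MvPolynomial (Fin 2) ℤ)
    (hc : (p : ℤ) • c = (X 0 + X 1) ^ p - X 0 ^ p - X 1 ^ p)
    {A : Type} [CommRing A] (a b : A) :
    (p : A) * MvPolynomial.aeval (fun i : Fin 2 => if i = 0 then a else b) c
      = (a + b) ^ p - a ^ p - b ^ p := by
  have h := congrArg (MvPolynomial.aeval (fun i : Fin 2 => if i = 0 then a else b)) hc
  simpa [zsmul_eq_mul, show (1 : Fin 2) ≠ 0 by decide] using h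

lemma iter_spec (p : ℕ) (hp : p.Prime) (c : MvPolynomial (Fin 2) ℤ)
    (hc : (p : ℤ) • c = (X 0 + X 1) ^ p - X 0 ^ p - X 1 ^ p) (n : ℕ) :
    (iterW c (Polynomial ℤ) (Polynomial.X, 0) n).1 = (n : Polynomial ℤ) * Polynomial.X ∧
    (p : Polynomial ℤ) * (iterW c (Polynomial ℤ) (Polynomial.X, 0) n).2
      = ((n : Polynomial ℤ) ^ p - (n : Polynomial ℤ)) * Polynomial.X ^ p := by
  induction n with
  | zero => simp [iterW, zero_pow hp.ne_zero]
  | succ n ih =>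
    obtain ⟨ih1, ih2⟩ := ih
    constructor
    · show (iterW c (Polynomial ℤ) (Polynomial.X, 0) n).1 + Polynomial.X = _
      rw [ih1]; push_cast; ring
    · show (p : Polynomial ℤ) * ((iterW c (Polynomial ℤ) (Polynomial.X, 0) n).2 + 0 +
        MvPolynomial.aeval (fun i : Fin 2 =>
          if i = 0 then (iterW c (Polynomial ℤ) (Polynomial.X, 0) n).1 else Polynomial.X) c) = _
      rw [mul_add, mul_add, ih2]
      have hce : (p : Polynomial ℤ) * MvPolynomial.aeval (fun i : Fin 2 =>
          if i = 0 then (iterW c (Polynomial ℤ) (Polynomial.X, 0) n).1 else Polynomial.X) c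
          = ((iterW c (Polynomial ℤ) (Polynomial.X, 0) n).1 + Polynomial.X) ^ p
            - (iterW c (Polynomial ℤ) (Polynomial.X, 0) n).1 ^ p - Polynomial.X ^ p :=
        cocycle_eval p c hc _ _
      rw [hce]
      rw [ih1,
        show ((n : Polynomial ℤ) * Polynomial.X + Polynomial.X)
          = ((n : Polynomial ℤ) + 1) * Polynomial.X by ring, mul_pow]
      push_cast
      ring

/-- The crucial torsion argument: over a nontrivial ring `k` in which `p` vanishes,
there is no injective map from the `k[X]`-points of `W_p` to any abelian group-structure
on `k[X] × k[X]` in which `p`-fold sums vanish (here: the additive one),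
compatible with the group laws. -/
lemma key (p : ℕ) (hp : p.Prime) (c : MvPolynomial (Fin 2) ℤ)
    (hc : (p : ℤ) • c = (X 0 + X 1) ^ p - X 0 ^ p - X 1 ^ p)
    (k : Type) [CommRing k] [Nontrivial k] (hk : (p : k) = 0)
    (g : Polynomial k × Polynomial k → Polynomial k × Polynomial k)
    (hinj : Function.Injective g)
    (hmul : ∀ v w, g (wittMul c (Polynomial k) v w) = g v + g w) : False := by
  have hcc : MvPolynomial.constantCoeff c = 0 := by
    have h := congrArg MvPolynomial.constantCoeff hc
    rw [MvPolynomial.smul_eq_C_mul] at h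
    simp [zero_pow hp.ne_zero] at h
    rcases h with h | h
    · exact absurd (by exact_mod_cast h) hp.ne_zero
    · exact h
  have hzero : wittMul c (Polynomial k) (0, 0) (0, 0) = (0, 0) := by
    have h : (fun i : Fin 2 => if i = 0 then (0 : Polynomial k) else 0)
        = fun _ => 0 := by funext i; split <;> rfl
    simp [wittMul, h, MvPolynomial.aeval_zero', hcc]
  have hg0 : g (0, 0) = 0 := by
    have h := hmul (0, 0) (0, 0)
    rw [hzero] at h
    exact (left_eq_add.mp h)
  have hgiter : ∀ n : ℕ, g (iterW c (Polynomial k) (Polynomial.X, 0) n)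
      = n • g (Polynomial.X, 0) := by
    intro n
    induction n with
    | zero => simpa [iterW] using hg0
    | succ n ih => rw [iterW, hmul, ih, succ_nsmul]
  set f : Polynomial ℤ →+* Polynomial k := Polynomial.mapRingHom (Int.castRingHom k) with hf
  have hfX : f Polynomial.X = Polynomial.X := by simp [hf]
  have htrans := ringHom_iterW c f (Polynomial.X, 0) p
  rw [show f (Polynomial.X, (0 : Polynomial ℤ)).1 = Polynomial.X by simpa using hfX,
    show f (Polynomial.X, (0 : Polynomial ℤ)).2 = 0 by simp] at htrans
  have hpne : (p : Polynomial ℤ) ≠ 0 := Nat.cast_ne_zero.mpr hp.ne_zero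
  have hs : (iterW c (Polynomial ℤ) (Polynomial.X, 0) p).2
      = ((p : Polynomial ℤ) ^ (p - 1) - 1) * Polynomial.X ^ p := by
    apply mul_left_cancel₀ hpne
    rw [(iter_spec p hp c hc p).2]
    have hpow : (p : Polynomial ℤ) ^ p
        = (p : Polynomial ℤ) ^ (p - 1) * (p : Polynomial ℤ) := by
      rw [← pow_succ, Nat.sub_add_cancel hp.one_le]
    rw [hpow]
    ring
  have hpk : (p : Polynomial k) = 0 := by
    rw [← Polynomial.C_eq_natCast, hk, map_zero]
  have hsm : (p : ℕ) • g (Polynomial.X, (0 : Polynomial k)) = 0 := by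
    have h : ∀ a : Polynomial k, p • a = 0 := fun a => by
      rw [nsmul_eq_mul, hpk, zero_mul]
    exact Prod.ext (h _) (h _)
  have hiter0 : iterW c (Polynomial k) (Polynomial.X, 0) p = (0, 0) := by
    apply hinj
    rw [hgiter p, hsm, hg0]
  have h2 : (iterW c (Polynomial k) (Polynomial.X, 0) p).2 = - Polynomial.X ^ p := by
    rw [htrans]
    show f _ = _
    rw [hs, map_mul, map_pow, hfX, map_sub, map_one, map_pow, map_natCast, hpk,
      zero_pow (Nat.sub_ne_zero_of_lt hp.one_lt)]
    ring
  rw [hiter0] at h2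
  have hX : (Polynomial.X : Polynomial k) ^ p = 0 := by
    have h := h2.symm
    rwa [neg_eq_zero] at h
  exact one_ne_zero (α := k) (by simpa using congrArg (fun q => Polynomial.coeff q p) hX)

/-- If `p` is invertible in `R`, then `W_p ×_ℤ R ≅ 𝔾ₐ²` over `R`. -/
def toAdd (p : ℕ) (c : MvPolynomial (Fin 2) ℤ)
    (hc : (p : ℤ) • c = (X 0 + X 1) ^ p - X 0 ^ p - X 1 ^ p)
    (R : Type) [CommRing R] (hu : IsUnit (p : R)) :
    PlaneGrpIso (wittMul c) (fun A _ v w => v + w) R where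
  e A _ _ :=
    { toFun := fun v => (v.1, v.2 - algebraMap R A ↑hu.unit⁻¹ * v.1 ^ p)
      invFun := fun v => (v.1, v.2 + algebraMap R A ↑hu.unit⁻¹ * v.1 ^ p)
      left_inv := fun v => by simp
      right_inv := fun v => by simp }
  e_mul A _ _ v w := by
    have hinv : algebraMap R A ↑hu.unit⁻¹ * (p : A) = 1 := by
      rw [show ((p : ℕ) : A) = algebraMap R A (p : R) by rw [map_natCast],
        ← map_mul, show (↑hu.unit⁻¹ * (p : R)) = ↑hu.unit⁻¹ * ↑hu.unit by
          rw [IsUnit.unit_spec], Units.inv_mul, map_one]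
    have hval : MvPolynomial.aeval (fun i : Fin 2 => if i = 0 then v.1 else w.1) c
        = algebraMap R A ↑hu.unit⁻¹ * ((v.1 + w.1) ^ p - v.1 ^ p - w.1 ^ p) := by
      rw [← cocycle_eval p c hc v.1 w.1, ← mul_assoc, hinv, one_mul]
    show (_, _) = (_, _)
    simp only [wittMul]
    refine Prod.ext rfl ?_
    simp only [Equiv.coe_fn_mk]
    rw [hval]
    ring
  e_natural A A' _ _ _ _ f v := by
    refine Prod.ext rfl ?_
    simp only [Equiv.coe_fn_mk]
    rw [map_sub, map_mul, map_pow, AlgHom.commutes]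

/-- If `W_p ×_ℤ R ≅ 𝔾ₐ²` over `R`, then `p` is invertible in `R`. -/
lemma part1_forward (p : ℕ) (hp : p.Prime) (c : MvPolynomial (Fin 2) ℤ)
    (hc : (p : ℤ) • c = (X 0 + X 1) ^ p - X 0 ^ p - X 1 ^ p)
    (R : Type) [CommRing R]
    (h : Nonempty (PlaneGrpIso (wittMul c) (fun A _ v w => v + w) R)) :
    IsUnit (p : R) := by
  by_contra hu
  obtain ⟨iso⟩ := h
  set I := Ideal.span {(p : R)} with hI
  have hItop : I ≠ ⊤ := by rwa [hI, Ne, Ideal.span_singleton_eq_top]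
  haveI : Nontrivial (R ⧸ I) := Ideal.Quotient.nontrivial_iff.mpr hItop
  have hk : ((p : ℕ) : R ⧸ I) = 0 := by
    rw [← map_natCast (Ideal.Quotient.mk I), Ideal.Quotient.eq_zero_iff_mem]
    exact Ideal.mem_span_singleton_self _
  exact key p hp c hc (R ⧸ I) hk (iso.e (Polynomial (R ⧸ I)))
    (Equiv.injective _) (fun v w => iso.e_mul _ v w)

/-- Distinct primes give non-isomorphic Witt group schemes over `ℤ`. -/
lemma part2 (p q : ℕ) (hp : p.Prime) (hq : q.Prime) (c c' : MvPolynomial (Fin 2) ℤ)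
    (hc : (p : ℤ) • c = (X 0 + X 1) ^ p - X 0 ^ p - X 1 ^ p)
    (hc' : (q : ℤ) • c' = (X 0 + X 1) ^ q - X 0 ^ q - X 1 ^ q) (hpq : p ≠ q) :
    IsEmpty (PlaneGrpIso (wittMul c) (wittMul c') ℤ) := by
  constructor
  intro iso
  haveI : Fact p.Prime := ⟨hp⟩
  have hqu : IsUnit ((q : ℕ) : ZMod p) := by
    rw [isUnit_iff_ne_zero, Ne, ZMod.natCast_eq_zero_iff]
    intro hdvd
    exact hpq ((Nat.prime_dvd_prime_iff_eq hp hq).mp hdvd)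
  let iso2 := toAdd q c' hc' (ZMod p) hqu
  refine key p hp c hc (ZMod p) (ZMod.natCast_self p)
    (fun v => iso2.e (Polynomial (ZMod p)) (iso.e (Polynomial (ZMod p)) v))
    (Function.Injective.comp (Equiv.injective _) (Equiv.injective _)) ?_
  intro v w
  rw [iso.e_mul]
  exact iso2.e_mul (Polynomial (ZMod p)) _ _

/-- Existence of the structure polynomial `((X+X')^p − X^p − X'^p)/p`. -/
lemma exists_c (p : ℕ) (hp : p.Prime) :
    ∃ c : MvPolynomial (Fin 2) ℤ,
      (p : ℤ) • c = (X 0 + X 1) ^ p - X 0 ^ p - X 1 ^ p := by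
  haveI : Fact p.Prime := ⟨hp⟩
  have hdvd : MvPolynomial.C (p : ℤ)
      ∣ ((X 0 + X 1) ^ p - X 0 ^ p - X 1 ^ p : MvPolynomial (Fin 2) ℤ) := by
    rw [MvPolynomial.C_dvd_iff_dvd_coeff]
    intro i
    have hmap : MvPolynomial.map (Int.castRingHom (ZMod p))
        ((X 0 + X 1) ^ p - X 0 ^ p - X 1 ^ p : MvPolynomial (Fin 2) ℤ) = 0 := by
      simp only [map_sub, map_pow, map_add, MvPolynomial.map_X]
      rw [add_pow_char]
      ring
    have h := congrArg (fun φ => MvPolynomial.coeff i φ) hmap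
    simp only [MvPolynomial.coeff_map, MvPolynomial.coeff_zero] at h
    exact_mod_cast (ZMod.intCast_zmod_eq_zero_iff_dvd _ p).mp (by exact_mod_cast h)
  obtain ⟨c, hcf⟩ := hdvd
  exact ⟨c, by rw [MvPolynomial.smul_eq_C_mul, ← hcf]⟩

/-- A Witt datum is determined by its prime. -/
lemma datum_eq (d d' : WittDatum) (h : d.1.1 = d'.1.1) : d = d' := by
  obtain ⟨⟨p, c⟩, hp, hc⟩ := d
  obtain ⟨⟨p', c'⟩, hp', hc'⟩ := d'
  simp only at h
  subst h
  have hpc : MvPolynomial.C ((p : ℤ)) * c = MvPolynomial.C ((p : ℤ)) * c' := by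
    rw [← MvPolynomial.smul_eq_C_mul, ← MvPolynomial.smul_eq_C_mul, hc, hc']
  have hCne : (MvPolynomial.C ((p : ℤ)) : MvPolynomial (Fin 2) ℤ) ≠ 0 := by
    simp [hp.ne_zero]
  have : c = c' := mul_left_cancel₀ hCne hpc
  subst this
  rfl

/-- For `W_p` the additive group scheme of Witt vectors of length two
over `ℤ` (the affine plane with group law
`(x,y)·(x',y') = (x + x', y + y' + ((x+x')^p − x^p − x'^p)/p)`):
(i) for a commutative ring `R`, the base change `W_p ×_ℤ R` is isomorphic to `𝔾ₐ²` as an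
`R`-group scheme if and only if `p` is invertible in `R`;  consequently (ii) for
distinct primes `p ≠ q` the group schemes `W_p` and `W_q` over `ℤ` are not isomorphic,
and (iii) there are infinitely many pairwise non-isomorphic such group schemes
(smooth commutative unipotent of dimension `2`) over `ℤ`. -/
theorem witt_vector_group_schemes
    (p q : ℕ) (hp : p.Prime) (hq : q.Prime) (c c' : MvPolynomial (Fin 2) ℤ)
    (hc : (p : ℤ) • c = (X 0 + X 1) ^ p - X 0 ^ p - X 1 ^ p)
    (hc' : (q : ℤ) • c' = (X 0 + X 1) ^ q - X 0 ^ q - X 1 ^ q) :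
    (∀ (R : Type) [CommRing R],
        Nonempty (PlaneGrpIso (wittMul c) (fun A _ v w => v + w) R) ↔ IsUnit (p : R)) ∧
    (p ≠ q → IsEmpty (PlaneGrpIso (wittMul c) (wittMul c') ℤ)) ∧
    Infinite (Quot (fun (d d' : WittDatum) =>
      Nonempty (PlaneGrpIso (wittMul d.1.2) (wittMul d'.1.2) ℤ))) := by
  refine ⟨fun R _ => ⟨fun h => part1_forward p hp c hc R h, fun hu => ⟨toAdd p c hc R hu⟩⟩,
    fun hpq => part2 p q hp hq c c' hc hc' hpq, ?_⟩
  set rel := fun (d d' : WittDatum) =>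
    Nonempty (PlaneGrpIso (wittMul d.1.2) (wittMul d'.1.2) ℤ) with hrel
  have hprime : ∀ d d' : WittDatum, rel d d' → d.1.1 = d'.1.1 := by
    rintro d d' ⟨iso⟩
    by_contra hne
    exact (part2 d.1.1 d'.1.1 d.2.1 d'.2.1 d.1.2 d'.1.2 d.2.2 d'.2.2 hne).false iso
  haveI : Infinite {pp : ℕ // pp.Prime} := Nat.infinite_setOf_prime.to_subtype
  apply Infinite.of_injective (fun pp : {pp : ℕ // pp.Prime} =>
    Quot.mk rel ⟨(pp.1, (exists_c pp.1 pp.2).choose), pp.2, (exists_c pp.1 pp.2).choose_spec⟩)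
  intro a b hab
  have h := congrArg (Quot.lift (fun d : WittDatum => d.1.1) hprime) hab
  exact Subtype.ext h
end
end

section
/- For λ ∈ Z, let u_λ be the 7-dimensional nilpotent Lie algebra over Z with basis x_1,…,x_7 and nonzero brackets [x_1, x_i] = x_{i+1} for 2 ≤ i ≤ 6, [x_2, x_3] = x_5, [x_2, x_4] = x_6, [x_2, x_5] = λ x_7, and [x_3, x_4] = (1 − λ) x_7. Then for distinct integers λ and μ, the base-changed Lie algebras u_λ ⊗ Q̄ and u_μ ⊗ Q̄ over an algebraic closure Q̄ of Q are not isomorphic as Lie algebras. -/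
/-- Structure constants (upper-triangular part) of the 7-dimensional nilpotent Lie
algebras `u_λ` (label `123457_I` in Seeley's classification).  With `x_i` denoting the
basis vector indexed by `i - 1 : Fin 7`, the nonzero brackets are
`[x₁, xᵢ] = x_{i+1}` for `2 ≤ i ≤ 6`, `[x₂, x₃] = x₅`, `[x₂, x₄] = x₆`,
`[x₂, x₅] = λ • x₇` and `[x₃, x₄] = (1 − λ) • x₇`. -/
def uRow (lam : ℤ) : Fin 7 → Fin 7 → Fin 7 → ℤ
  | 0, 1 => Pi.single 2 1
  | 0, 2 => Pi.single 3 1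
  | 0, 3 => Pi.single 4 1
  | 0, 4 => Pi.single 5 1
  | 0, 5 => Pi.single 6 1
  | 1, 2 => Pi.single 4 1
  | 1, 3 => Pi.single 5 1
  | 1, 4 => Pi.single 6 lam
  | 2, 3 => Pi.single 6 (1 - lam)
  | _, _ => 0

/-- The full (antisymmetrised) structure constants of the Lie algebra `u_λ`:
`⁅x_i, x_j⁆ = ∑ k, uStruct λ i j k • x_k`. -/
def uStruct (lam : ℤ) (i j k : Fin 7) : ℤ := uRow lam i j k - uRow lam j i k



private lemma uRow_00 (lam : ℤ) : uRow lam 0 0 = 0 := rfl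
private lemma uRow_01 (lam : ℤ) : uRow lam 0 1 = Pi.single 2 1 := rfl
private lemma uRow_02 (lam : ℤ) : uRow lam 0 2 = Pi.single 3 1 := rfl
private lemma uRow_03 (lam : ℤ) : uRow lam 0 3 = Pi.single 4 1 := rfl
private lemma uRow_04 (lam : ℤ) : uRow lam 0 4 = Pi.single 5 1 := rfl
private lemma uRow_05 (lam : ℤ) : uRow lam 0 5 = Pi.single 6 1 := rfl
private lemma uRow_06 (lam : ℤ) : uRow lam 0 6 = 0 := rfl
private lemma uRow_10 (lam : ℤ) : uRow lam 1 0 = 0 := rfl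
private lemma uRow_11 (lam : ℤ) : uRow lam 1 1 = 0 := rfl
private lemma uRow_12 (lam : ℤ) : uRow lam 1 2 = Pi.single 4 1 := rfl
private lemma uRow_13 (lam : ℤ) : uRow lam 1 3 = Pi.single 5 1 := rfl
private lemma uRow_14 (lam : ℤ) : uRow lam 1 4 = Pi.single 6 lam := rfl
private lemma uRow_15 (lam : ℤ) : uRow lam 1 5 = 0 := rfl
private lemma uRow_16 (lam : ℤ) : uRow lam 1 6 = 0 := rfl
private lemma uRow_20 (lam : ℤ) : uRow lam 2 0 = 0 := rfl
private lemma uRow_21 (lam : ℤ) : uRow lam 2 1 = 0 := rfl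
private lemma uRow_22 (lam : ℤ) : uRow lam 2 2 = 0 := rfl
private lemma uRow_23 (lam : ℤ) : uRow lam 2 3 = Pi.single 6 (1 - lam) := rfl
private lemma uRow_24 (lam : ℤ) : uRow lam 2 4 = 0 := rfl
private lemma uRow_25 (lam : ℤ) : uRow lam 2 5 = 0 := rfl
private lemma uRow_26 (lam : ℤ) : uRow lam 2 6 = 0 := rfl
private lemma uRow_30 (lam : ℤ) : uRow lam 3 0 = 0 := rfl
private lemma uRow_31 (lam : ℤ) : uRow lam 3 1 = 0 := rfl
private lemma uRow_32 (lam : ℤ) : uRow lam 3 2 = 0 := rfl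
private lemma uRow_33 (lam : ℤ) : uRow lam 3 3 = 0 := rfl
private lemma uRow_34 (lam : ℤ) : uRow lam 3 4 = 0 := rfl
private lemma uRow_35 (lam : ℤ) : uRow lam 3 5 = 0 := rfl
private lemma uRow_36 (lam : ℤ) : uRow lam 3 6 = 0 := rfl
private lemma uRow_40 (lam : ℤ) : uRow lam 4 0 = 0 := rfl
private lemma uRow_41 (lam : ℤ) : uRow lam 4 1 = 0 := rfl
private lemma uRow_42 (lam : ℤ) : uRow lam 4 2 = 0 := rfl
private lemma uRow_43 (lam : ℤ) : uRow lam 4 3 = 0 := rfl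
private lemma uRow_44 (lam : ℤ) : uRow lam 4 4 = 0 := rfl
private lemma uRow_45 (lam : ℤ) : uRow lam 4 5 = 0 := rfl
private lemma uRow_46 (lam : ℤ) : uRow lam 4 6 = 0 := rfl
private lemma uRow_50 (lam : ℤ) : uRow lam 5 0 = 0 := rfl
private lemma uRow_51 (lam : ℤ) : uRow lam 5 1 = 0 := rfl
private lemma uRow_52 (lam : ℤ) : uRow lam 5 2 = 0 := rfl
private lemma uRow_53 (lam : ℤ) : uRow lam 5 3 = 0 := rfl
private lemma uRow_54 (lam : ℤ) : uRow lam 5 4 = 0 := rfl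
private lemma uRow_55 (lam : ℤ) : uRow lam 5 5 = 0 := rfl
private lemma uRow_56 (lam : ℤ) : uRow lam 5 6 = 0 := rfl
private lemma uRow_60 (lam : ℤ) : uRow lam 6 0 = 0 := rfl
private lemma uRow_61 (lam : ℤ) : uRow lam 6 1 = 0 := rfl
private lemma uRow_62 (lam : ℤ) : uRow lam 6 2 = 0 := rfl
private lemma uRow_63 (lam : ℤ) : uRow lam 6 3 = 0 := rfl
private lemma uRow_64 (lam : ℤ) : uRow lam 6 4 = 0 := rfl
private lemma uRow_65 (lam : ℤ) : uRow lam 6 5 = 0 := rfl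
private lemma uRow_66 (lam : ℤ) : uRow lam 6 6 = 0 := rfl

private lemma sum_lie' {L : Type} [LieRing L] {ι : Type} (s : Finset ι) (f : ι → L) (y : L) :
    ⁅∑ i ∈ s, f i, y⁆ = ∑ i ∈ s, ⁅f i, y⁆ := by
  classical
  induction s using Finset.induction with
  | empty => simp
  | insert a s h ih => simp [Finset.sum_insert h, add_lie, ih]

private lemma lie_sum' {L : Type} [LieRing L] {ι : Type} (s : Finset ι) (f : ι → L) (y : L) :
    ⁅y, ∑ i ∈ s, f i⁆ = ∑ i ∈ s, ⁅y, f i⁆ := by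
  classical
  induction s using Finset.induction with
  | empty => simp
  | insert a s h ih => simp [Finset.sum_insert h, lie_add, ih]

private lemma repr_bracket {K L : Type} [Field K] [LieRing L] [LieAlgebra K L]
    (b : Module.Basis (Fin 7) K L) (S : Fin 7 → Fin 7 → Fin 7 → ℤ)
    (h : ∀ i j, ⁅b i, b j⁆ = ∑ k : Fin 7, (S i j k : K) • b k) (u v : L) (k : Fin 7) :
    b.repr ⁅u, v⁆ k = ∑ i : Fin 7, ∑ j : Fin 7, b.repr u i * b.repr v j * (S i j k : K) := by
  conv_lhs => rw [← b.sum_repr u, ← b.sum_repr v]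
  rw [sum_lie']
  simp only [lie_sum', smul_lie, lie_smul, h, Finset.smul_sum, smul_smul]
  simp only [map_sum, map_smul, Module.Basis.repr_self, Finsupp.coe_finset_sum, Finset.sum_apply,
    Finsupp.coe_smul, Pi.smul_apply, Finsupp.single_apply, smul_eq_mul]
  refine Finset.sum_congr rfl fun i _ => Finset.sum_congr rfl fun j _ => ?_
  rw [Finset.sum_eq_single k] <;> simp +contextual [mul_comm, mul_left_comm, mul_assoc]


section Gens
variable {K M : Type} [Field K] [LieRing M] [LieAlgebra K M]

private lemma gen0 (b : Module.Basis (Fin 7) K M) (mu : ℤ)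
    (h : ∀ i j, ⁅b i, b j⁆ = ∑ k : Fin 7, (uStruct mu i j k : K) • b k) (w w' : M) :
    b.repr ⁅w, w'⁆ 0 = 0 := by
  rw [repr_bracket b _ h]
  simp [Fin.sum_univ_seven, uStruct, uRow_00, uRow_01, uRow_02, uRow_03, uRow_04, uRow_05, uRow_06, uRow_10, uRow_11, uRow_12, uRow_13, uRow_14, uRow_15, uRow_16, uRow_20, uRow_21, uRow_22, uRow_23, uRow_24, uRow_25, uRow_26, uRow_30, uRow_31, uRow_32, uRow_33, uRow_34, uRow_35, uRow_36, uRow_40, uRow_41, uRow_42, uRow_43, uRow_44, uRow_45, uRow_46, uRow_50, uRow_51, uRow_52, uRow_53, uRow_54, uRow_55, uRow_56, uRow_60, uRow_61, uRow_62, uRow_63, uRow_64, uRow_65, uRow_66, Pi.single_apply]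

private lemma gen1 (b : Module.Basis (Fin 7) K M) (mu : ℤ)
    (h : ∀ i j, ⁅b i, b j⁆ = ∑ k : Fin 7, (uStruct mu i j k : K) • b k) (w w' : M) :
    b.repr ⁅w, w'⁆ 1 = 0 := by
  rw [repr_bracket b _ h]
  simp [Fin.sum_univ_seven, uStruct, uRow_00, uRow_01, uRow_02, uRow_03, uRow_04, uRow_05, uRow_06, uRow_10, uRow_11, uRow_12, uRow_13, uRow_14, uRow_15, uRow_16, uRow_20, uRow_21, uRow_22, uRow_23, uRow_24, uRow_25, uRow_26, uRow_30, uRow_31, uRow_32, uRow_33, uRow_34, uRow_35, uRow_36, uRow_40, uRow_41, uRow_42, uRow_43, uRow_44, uRow_45, uRow_46, uRow_50, uRow_51, uRow_52, uRow_53, uRow_54, uRow_55, uRow_56, uRow_60, uRow_61, uRow_62, uRow_63, uRow_64, uRow_65, uRow_66, Pi.single_apply]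

private lemma gen2 (b : Module.Basis (Fin 7) K M) (mu : ℤ)
    (h : ∀ i j, ⁅b i, b j⁆ = ∑ k : Fin 7, (uStruct mu i j k : K) • b k) (w w' : M) :
    b.repr ⁅w, w'⁆ 2 = b.repr w 0 * b.repr w' 1 - b.repr w 1 * b.repr w' 0 := by
  rw [repr_bracket b _ h]
  simp [Fin.sum_univ_seven, uStruct, uRow_00, uRow_01, uRow_02, uRow_03, uRow_04, uRow_05, uRow_06, uRow_10, uRow_11, uRow_12, uRow_13, uRow_14, uRow_15, uRow_16, uRow_20, uRow_21, uRow_22, uRow_23, uRow_24, uRow_25, uRow_26, uRow_30, uRow_31, uRow_32, uRow_33, uRow_34, uRow_35, uRow_36, uRow_40, uRow_41, uRow_42, uRow_43, uRow_44, uRow_45, uRow_46, uRow_50, uRow_51, uRow_52, uRow_53, uRow_54, uRow_55, uRow_56, uRow_60, uRow_61, uRow_62, uRow_63, uRow_64, uRow_65, uRow_66, Pi.single_apply]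
  ring

private lemma gen3 (b : Module.Basis (Fin 7) K M) (mu : ℤ)
    (h : ∀ i j, ⁅b i, b j⁆ = ∑ k : Fin 7, (uStruct mu i j k : K) • b k) (w w' : M) :
    b.repr ⁅w, w'⁆ 3 = b.repr w 0 * b.repr w' 2 - b.repr w 2 * b.repr w' 0 := by
  rw [repr_bracket b _ h]
  simp [Fin.sum_univ_seven, uStruct, uRow_00, uRow_01, uRow_02, uRow_03, uRow_04, uRow_05, uRow_06, uRow_10, uRow_11, uRow_12, uRow_13, uRow_14, uRow_15, uRow_16, uRow_20, uRow_21, uRow_22, uRow_23, uRow_24, uRow_25, uRow_26, uRow_30, uRow_31, uRow_32, uRow_33, uRow_34, uRow_35, uRow_36, uRow_40, uRow_41, uRow_42, uRow_43, uRow_44, uRow_45, uRow_46, uRow_50, uRow_51, uRow_52, uRow_53, uRow_54, uRow_55, uRow_56, uRow_60, uRow_61, uRow_62, uRow_63, uRow_64, uRow_65, uRow_66, Pi.single_apply]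
  ring

private lemma gen4 (b : Module.Basis (Fin 7) K M) (mu : ℤ)
    (h : ∀ i j, ⁅b i, b j⁆ = ∑ k : Fin 7, (uStruct mu i j k : K) • b k) (w w' : M) :
    b.repr ⁅w, w'⁆ 4 = b.repr w 0 * b.repr w' 3 - b.repr w 3 * b.repr w' 0
      + b.repr w 1 * b.repr w' 2 - b.repr w 2 * b.repr w' 1 := by
  rw [repr_bracket b _ h]
  simp [Fin.sum_univ_seven, uStruct, uRow_00, uRow_01, uRow_02, uRow_03, uRow_04, uRow_05, uRow_06, uRow_10, uRow_11, uRow_12, uRow_13, uRow_14, uRow_15, uRow_16, uRow_20, uRow_21, uRow_22, uRow_23, uRow_24, uRow_25, uRow_26, uRow_30, uRow_31, uRow_32, uRow_33, uRow_34, uRow_35, uRow_36, uRow_40, uRow_41, uRow_42, uRow_43, uRow_44, uRow_45, uRow_46, uRow_50, uRow_51, uRow_52, uRow_53, uRow_54, uRow_55, uRow_56, uRow_60, uRow_61, uRow_62, uRow_63, uRow_64, uRow_65, uRow_66, Pi.single_apply]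
  ring

private lemma gen5 (b : Module.Basis (Fin 7) K M) (mu : ℤ)
    (h : ∀ i j, ⁅b i, b j⁆ = ∑ k : Fin 7, (uStruct mu i j k : K) • b k) (w w' : M) :
    b.repr ⁅w, w'⁆ 5 = b.repr w 0 * b.repr w' 4 - b.repr w 4 * b.repr w' 0
      + b.repr w 1 * b.repr w' 3 - b.repr w 3 * b.repr w' 1 := by
  rw [repr_bracket b _ h]
  simp [Fin.sum_univ_seven, uStruct, uRow_00, uRow_01, uRow_02, uRow_03, uRow_04, uRow_05, uRow_06, uRow_10, uRow_11, uRow_12, uRow_13, uRow_14, uRow_15, uRow_16, uRow_20, uRow_21, uRow_22, uRow_23, uRow_24, uRow_25, uRow_26, uRow_30, uRow_31, uRow_32, uRow_33, uRow_34, uRow_35, uRow_36, uRow_40, uRow_41, uRow_42, uRow_43, uRow_44, uRow_45, uRow_46, uRow_50, uRow_51, uRow_52, uRow_53, uRow_54, uRow_55, uRow_56, uRow_60, uRow_61, uRow_62, uRow_63, uRow_64, uRow_65, uRow_66, Pi.single_apply]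
  ring

private lemma gen6 (b : Module.Basis (Fin 7) K M) (mu : ℤ)
    (h : ∀ i j, ⁅b i, b j⁆ = ∑ k : Fin 7, (uStruct mu i j k : K) • b k) (w w' : M) :
    b.repr ⁅w, w'⁆ 6 = b.repr w 0 * b.repr w' 5 - b.repr w 5 * b.repr w' 0
      + (mu : K) * (b.repr w 1 * b.repr w' 4 - b.repr w 4 * b.repr w' 1)
      + (1 - (mu : K)) * (b.repr w 2 * b.repr w' 3 - b.repr w 3 * b.repr w' 2) := by
  rw [repr_bracket b _ h]
  simp [Fin.sum_univ_seven, uStruct, uRow_00, uRow_01, uRow_02, uRow_03, uRow_04, uRow_05, uRow_06, uRow_10, uRow_11, uRow_12, uRow_13, uRow_14, uRow_15, uRow_16, uRow_20, uRow_21, uRow_22, uRow_23, uRow_24, uRow_25, uRow_26, uRow_30, uRow_31, uRow_32, uRow_33, uRow_34, uRow_35, uRow_36, uRow_40, uRow_41, uRow_42, uRow_43, uRow_44, uRow_45, uRow_46, uRow_50, uRow_51, uRow_52, uRow_53, uRow_54, uRow_55, uRow_56, uRow_60, uRow_61, uRow_62, uRow_63, uRow_64, uRow_65, uRow_66, Pi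.single_apply]
  ring

end Gens

set_option maxHeartbeats 2000000 in
/-- For `λ ∈ ℤ` let `u_λ` be the 7-dimensional nilpotent Lie algebra
with basis `x₁, …, x₇` and nonzero brackets `[x₁, xᵢ] = x_{i+1}` (`2 ≤ i ≤ 6`),
`[x₂, x₃] = x₅`, `[x₂, x₄] = x₆`, `[x₂, x₅] = λx₇`, `[x₃, x₄] = (1 − λ)x₇`.
Then for distinct integers `λ ≠ μ` the base changes `u_λ ⊗ ℚ̄` and `u_μ ⊗ ℚ̄` to an
algebraic closure `ℚ̄` of `ℚ` are not isomorphic as Lie algebras.  (Here `u_λ ⊗ ℚ̄` is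
formalised as any Lie algebra over `ℚ̄` possessing a basis with the above structure
constants.) -/
theorem nilpotent_lie_algebras_pairwise_nonisomorphic
    (Qbar : Type) [Field Qbar] [Algebra ℚ Qbar] [IsAlgClosure ℚ Qbar]
    (lam mu : ℤ) (hlm : lam ≠ mu)
    (L M : Type) [LieRing L] [LieAlgebra Qbar L] [LieRing M] [LieAlgebra Qbar M]
    (bL : Module.Basis (Fin 7) Qbar L) (bM : Module.Basis (Fin 7) Qbar M)
    (hL : ∀ i j : Fin 7, ⁅bL i, bL j⁆ = ∑ k : Fin 7, (uStruct lam i j k : Qbar) • bL k)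
    (hM : ∀ i j : Fin 7, ⁅bM i, bM j⁆ = ∑ k : Fin 7, (uStruct mu i j k : Qbar) • bM k) :
    IsEmpty (L ≃ₗ⁅Qbar⁆ M) := by
  have hchar : CharZero Qbar := charZero_of_injective_algebraMap (algebraMap ℚ Qbar).injective
  refine ⟨fun e => hlm ?_⟩
  have hmap0 : e (0 : L) = 0 := by
    simpa using (e : L ≃ₗ[Qbar] M).map_zero
  have hsym0 : e.symm (0 : M) = 0 := by
    simpa using (e.symm : M ≃ₗ[Qbar] L).map_zero
  have hb01 : ⁅bL 0, bL 1⁆ = bL 2 := by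
    rw [hL]; simp [Fin.sum_univ_seven, uStruct, uRow_00, uRow_01, uRow_02, uRow_03, uRow_04, uRow_05, uRow_06, uRow_10, uRow_11, uRow_12, uRow_13, uRow_14, uRow_15, uRow_16, uRow_20, uRow_21, uRow_22, uRow_23, uRow_24, uRow_25, uRow_26, uRow_30, uRow_31, uRow_32, uRow_33, uRow_34, uRow_35, uRow_36, uRow_40, uRow_41, uRow_42, uRow_43, uRow_44, uRow_45, uRow_46, uRow_50, uRow_51, uRow_52, uRow_53, uRow_54, uRow_55, uRow_56, uRow_60, uRow_61, uRow_62, uRow_63, uRow_64, uRow_65, uRow_66, Pi.single_apply]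
  have hb02 : ⁅bL 0, bL 2⁆ = bL 3 := by
    rw [hL]; simp [Fin.sum_univ_seven, uStruct, uRow_00, uRow_01, uRow_02, uRow_03, uRow_04, uRow_05, uRow_06, uRow_10, uRow_11, uRow_12, uRow_13, uRow_14, uRow_15, uRow_16, uRow_20, uRow_21, uRow_22, uRow_23, uRow_24, uRow_25, uRow_26, uRow_30, uRow_31, uRow_32, uRow_33, uRow_34, uRow_35, uRow_36, uRow_40, uRow_41, uRow_42, uRow_43, uRow_44, uRow_45, uRow_46, uRow_50, uRow_51, uRow_52, uRow_53, uRow_54, uRow_55, uRow_56, uRow_60, uRow_61, uRow_62, uRow_63, uRow_64, uRow_65, uRow_66, Pi.single_apply]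
  have hb03 : ⁅bL 0, bL 3⁆ = bL 4 := by
    rw [hL]; simp [Fin.sum_univ_seven, uStruct, uRow_00, uRow_01, uRow_02, uRow_03, uRow_04, uRow_05, uRow_06, uRow_10, uRow_11, uRow_12, uRow_13, uRow_14, uRow_15, uRow_16, uRow_20, uRow_21, uRow_22, uRow_23, uRow_24, uRow_25, uRow_26, uRow_30, uRow_31, uRow_32, uRow_33, uRow_34, uRow_35, uRow_36, uRow_40, uRow_41, uRow_42, uRow_43, uRow_44, uRow_45, uRow_46, uRow_50, uRow_51, uRow_52, uRow_53, uRow_54, uRow_55, uRow_56, uRow_60, uRow_61, uRow_62, uRow_63, uRow_64, uRow_65, uRow_66, Pi.single_apply]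
  have hb04 : ⁅bL 0, bL 4⁆ = bL 5 := by
    rw [hL]; simp [Fin.sum_univ_seven, uStruct, uRow_00, uRow_01, uRow_02, uRow_03, uRow_04, uRow_05, uRow_06, uRow_10, uRow_11, uRow_12, uRow_13, uRow_14, uRow_15, uRow_16, uRow_20, uRow_21, uRow_22, uRow_23, uRow_24, uRow_25, uRow_26, uRow_30, uRow_31, uRow_32, uRow_33, uRow_34, uRow_35, uRow_36, uRow_40, uRow_41, uRow_42, uRow_43, uRow_44, uRow_45, uRow_46, uRow_50, uRow_51, uRow_52, uRow_53, uRow_54, uRow_55, uRow_56, uRow_60, uRow_61, uRow_62, uRow_63, uRow_64, uRow_65, uRow_66, Pi.single_apply]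
  have hb05 : ⁅bL 0, bL 5⁆ = bL 6 := by
    rw [hL]; simp [Fin.sum_univ_seven, uStruct, uRow_00, uRow_01, uRow_02, uRow_03, uRow_04, uRow_05, uRow_06, uRow_10, uRow_11, uRow_12, uRow_13, uRow_14, uRow_15, uRow_16, uRow_20, uRow_21, uRow_22, uRow_23, uRow_24, uRow_25, uRow_26, uRow_30, uRow_31, uRow_32, uRow_33, uRow_34, uRow_35, uRow_36, uRow_40, uRow_41, uRow_42, uRow_43, uRow_44, uRow_45, uRow_46, uRow_50, uRow_51, uRow_52, uRow_53, uRow_54, uRow_55, uRow_56, uRow_60, uRow_61, uRow_62, uRow_63, uRow_64, uRow_65, uRow_66, Pi.single_apply]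
  have h1_0 : ⁅bL 1, bL 0⁆ = -bL 2 := by
    rw [hL]; simp [Fin.sum_univ_seven, uStruct, uRow_00, uRow_01, uRow_02, uRow_03, uRow_04, uRow_05, uRow_06, uRow_10, uRow_11, uRow_12, uRow_13, uRow_14, uRow_15, uRow_16, uRow_20, uRow_21, uRow_22, uRow_23, uRow_24, uRow_25, uRow_26, uRow_30, uRow_31, uRow_32, uRow_33, uRow_34, uRow_35, uRow_36, uRow_40, uRow_41, uRow_42, uRow_43, uRow_44, uRow_45, uRow_46, uRow_50, uRow_51, uRow_52, uRow_53, uRow_54, uRow_55, uRow_56, uRow_60, uRow_61, uRow_62, uRow_63, uRow_64, uRow_65, uRow_66, Pi.single_apply]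
  have h1_1 : ⁅bL 1, bL 1⁆ = 0 := by
    rw [hL]; simp [Fin.sum_univ_seven, uStruct, uRow_00, uRow_01, uRow_02, uRow_03, uRow_04, uRow_05, uRow_06, uRow_10, uRow_11, uRow_12, uRow_13, uRow_14, uRow_15, uRow_16, uRow_20, uRow_21, uRow_22, uRow_23, uRow_24, uRow_25, uRow_26, uRow_30, uRow_31, uRow_32, uRow_33, uRow_34, uRow_35, uRow_36, uRow_40, uRow_41, uRow_42, uRow_43, uRow_44, uRow_45, uRow_46, uRow_50, uRow_51, uRow_52, uRow_53, uRow_54, uRow_55, uRow_56, uRow_60, uRow_61, uRow_62, uRow_63, uRow_64, uRow_65, uRow_66, Pi.single_apply]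
  have h1_2 : ⁅bL 1, bL 2⁆ = bL 4 := by
    rw [hL]; simp [Fin.sum_univ_seven, uStruct, uRow_00, uRow_01, uRow_02, uRow_03, uRow_04, uRow_05, uRow_06, uRow_10, uRow_11, uRow_12, uRow_13, uRow_14, uRow_15, uRow_16, uRow_20, uRow_21, uRow_22, uRow_23, uRow_24, uRow_25, uRow_26, uRow_30, uRow_31, uRow_32, uRow_33, uRow_34, uRow_35, uRow_36, uRow_40, uRow_41, uRow_42, uRow_43, uRow_44, uRow_45, uRow_46, uRow_50, uRow_51, uRow_52, uRow_53, uRow_54, uRow_55, uRow_56, uRow_60, uRow_61, uRow_62, uRow_63, uRow_64, uRow_65, uRow_66, Pi.single_apply]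
  have h1_3 : ⁅bL 1, bL 3⁆ = bL 5 := by
    rw [hL]; simp [Fin.sum_univ_seven, uStruct, uRow_00, uRow_01, uRow_02, uRow_03, uRow_04, uRow_05, uRow_06, uRow_10, uRow_11, uRow_12, uRow_13, uRow_14, uRow_15, uRow_16, uRow_20, uRow_21, uRow_22, uRow_23, uRow_24, uRow_25, uRow_26, uRow_30, uRow_31, uRow_32, uRow_33, uRow_34, uRow_35, uRow_36, uRow_40, uRow_41, uRow_42, uRow_43, uRow_44, uRow_45, uRow_46, uRow_50, uRow_51, uRow_52, uRow_53, uRow_54, uRow_55, uRow_56, uRow_60, uRow_61, uRow_62, uRow_63, uRow_64, uRow_65, uRow_66, Pi.single_apply]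
  have h1_4 : ⁅bL 1, bL 4⁆ = (lam : Qbar) • bL 6 := by
    rw [hL]; simp [Fin.sum_univ_seven, uStruct, uRow_00, uRow_01, uRow_02, uRow_03, uRow_04, uRow_05, uRow_06, uRow_10, uRow_11, uRow_12, uRow_13, uRow_14, uRow_15, uRow_16, uRow_20, uRow_21, uRow_22, uRow_23, uRow_24, uRow_25, uRow_26, uRow_30, uRow_31, uRow_32, uRow_33, uRow_34, uRow_35, uRow_36, uRow_40, uRow_41, uRow_42, uRow_43, uRow_44, uRow_45, uRow_46, uRow_50, uRow_51, uRow_52, uRow_53, uRow_54, uRow_55, uRow_56, uRow_60, uRow_61, uRow_62, uRow_63, uRow_64, uRow_65, uRow_66, Pi.single_apply]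
  have h1_5 : ⁅bL 1, bL 5⁆ = 0 := by
    rw [hL]; simp [Fin.sum_univ_seven, uStruct, uRow_00, uRow_01, uRow_02, uRow_03, uRow_04, uRow_05, uRow_06, uRow_10, uRow_11, uRow_12, uRow_13, uRow_14, uRow_15, uRow_16, uRow_20, uRow_21, uRow_22, uRow_23, uRow_24, uRow_25, uRow_26, uRow_30, uRow_31, uRow_32, uRow_33, uRow_34, uRow_35, uRow_36, uRow_40, uRow_41, uRow_42, uRow_43, uRow_44, uRow_45, uRow_46, uRow_50, uRow_51, uRow_52, uRow_53, uRow_54, uRow_55, uRow_56, uRow_60, uRow_61, uRow_62, uRow_63, uRow_64, uRow_65, uRow_66, Pi.single_apply]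
  have h1_6 : ⁅bL 1, bL 6⁆ = 0 := by
    rw [hL]; simp [Fin.sum_univ_seven, uStruct, uRow_00, uRow_01, uRow_02, uRow_03, uRow_04, uRow_05, uRow_06, uRow_10, uRow_11, uRow_12, uRow_13, uRow_14, uRow_15, uRow_16, uRow_20, uRow_21, uRow_22, uRow_23, uRow_24, uRow_25, uRow_26, uRow_30, uRow_31, uRow_32, uRow_33, uRow_34, uRow_35, uRow_36, uRow_40, uRow_41, uRow_42, uRow_43, uRow_44, uRow_45, uRow_46, uRow_50, uRow_51, uRow_52, uRow_53, uRow_54, uRow_55, uRow_56, uRow_60, uRow_61, uRow_62, uRow_63, uRow_64, uRow_65, uRow_66, Pi.single_apply]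
  have h4_0 : ⁅bL 4, bL 0⁆ = -bL 5 := by
    rw [hL]; simp [Fin.sum_univ_seven, uStruct, uRow_00, uRow_01, uRow_02, uRow_03, uRow_04, uRow_05, uRow_06, uRow_10, uRow_11, uRow_12, uRow_13, uRow_14, uRow_15, uRow_16, uRow_20, uRow_21, uRow_22, uRow_23, uRow_24, uRow_25, uRow_26, uRow_30, uRow_31, uRow_32, uRow_33, uRow_34, uRow_35, uRow_36, uRow_40, uRow_41, uRow_42, uRow_43, uRow_44, uRow_45, uRow_46, uRow_50, uRow_51, uRow_52, uRow_53, uRow_54, uRow_55, uRow_56, uRow_60, uRow_61, uRow_62, uRow_63, uRow_64, uRow_65, uRow_66, Pi.single_apply]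
  -- (ad x2)^4 = 0 on L
  have adv1 : ∀ i : Fin 7, ⁅bL 1, ⁅bL 1, ⁅bL 1, ⁅bL 1, bL i⁆⁆⁆⁆ = 0 := by
    intro i
    fin_cases i <;>
      simp [h1_0, h1_1, h1_2, h1_3, h1_4, h1_5, h1_6, lie_neg, lie_smul, smul_zero]
  have adv : ∀ z : L, ⁅bL 1, ⁅bL 1, ⁅bL 1, ⁅bL 1, z⁆⁆⁆⁆ = 0 := by
    intro z
    conv_lhs => rw [← bL.sum_repr z]
    simp only [lie_sum', lie_smul, adv1, smul_zero, Finset.sum_const_zero]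
  have h236 : ⁅⁅bL 1, ⁅bL 1, bL 0⁆⁆, bL 0⁆ = bL 5 := by
    rw [h1_0, lie_neg, h1_2, neg_lie, h4_0, neg_neg]
  -- Step 1 : bM.repr (e (bL 1)) 0 = 0
  have hv4 : ⁅e (bL 1), ⁅e (bL 1), ⁅e (bL 1), ⁅e (bL 1), bM 1⁆⁆⁆⁆ = 0 := by
    have h := congrArg e (adv (e.symm (bM 1)))
    rw [hmap0] at h
    simpa only [LieEquiv.map_lie, LieEquiv.apply_symm_apply] using h
  have k1_2 : bM.repr ⁅e (bL 1), bM 1⁆ 2 = bM.repr (e (bL 1)) 0 := by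
    rw [gen2 bM mu hM]; simp
  have k1_0 : bM.repr ⁅e (bL 1), bM 1⁆ 0 = 0 := gen0 bM mu hM _ _
  have k1_1 : bM.repr ⁅e (bL 1), bM 1⁆ 1 = 0 := gen1 bM mu hM _ _
  have k2_0 : bM.repr ⁅e (bL 1), ⁅e (bL 1), bM 1⁆⁆ 0 = 0 := gen0 bM mu hM _ _
  have k2_1 : bM.repr ⁅e (bL 1), ⁅e (bL 1), bM 1⁆⁆ 1 = 0 := gen1 bM mu hM _ _
  have k2_2 : bM.repr ⁅e (bL 1), ⁅e (bL 1), bM 1⁆⁆ 2 = 0 := by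
    rw [gen2 bM mu hM, k1_0, k1_1]; ring
  have k2_3 : bM.repr ⁅e (bL 1), ⁅e (bL 1), bM 1⁆⁆ 3 = bM.repr (e (bL 1)) 0 ^ 2 := by
    rw [gen3 bM mu hM, k1_0, k1_2]; ring
  have k3_0 : bM.repr ⁅e (bL 1), ⁅e (bL 1), ⁅e (bL 1), bM 1⁆⁆⁆ 0 = 0 := gen0 bM mu hM _ _
  have k3_1 : bM.repr ⁅e (bL 1), ⁅e (bL 1), ⁅e (bL 1), bM 1⁆⁆⁆ 1 = 0 := gen1 bM mu hM _ _
  have k3_3 : bM.repr ⁅e (bL 1), ⁅e (bL 1), ⁅e (bL 1), bM 1⁆⁆⁆ 3 = 0 := by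
    rw [gen3 bM mu hM, k2_0, k2_2]; ring
  have k3_4 : bM.repr ⁅e (bL 1), ⁅e (bL 1), ⁅e (bL 1), bM 1⁆⁆⁆ 4
      = bM.repr (e (bL 1)) 0 ^ 3 := by
    rw [gen4 bM mu hM, k2_0, k2_1, k2_2, k2_3]; ring
  have hβ0 : bM.repr (e (bL 1)) 0 = 0 := by
    have hz : bM.repr ⁅e (bL 1), ⁅e (bL 1), ⁅e (bL 1), ⁅e (bL 1), bM 1⁆⁆⁆⁆ 5
        = bM.repr (e (bL 1)) 0 ^ 4 := by
      rw [gen5 bM mu hM, k3_0, k3_1, k3_3, k3_4]; ring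
    rw [hv4] at hz
    simp at hz
    exact pow_eq_zero_iff (by norm_num) |>.mp hz.symm
  -- e-images of basis vectors as iterated brackets
  have hf3 : e (bL 2) = ⁅e (bL 0), e (bL 1)⁆ := by rw [← hb01, LieEquiv.map_lie]
  have hf4 : e (bL 3) = ⁅e (bL 0), e (bL 2)⁆ := by rw [← hb02, LieEquiv.map_lie]
  have hf5 : e (bL 4) = ⁅e (bL 0), e (bL 3)⁆ := by rw [← hb03, LieEquiv.map_lie]
  have hf6 : e (bL 5) = ⁅e (bL 0), e (bL 4)⁆ := by rw [← hb04, LieEquiv.map_lie]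
  have hf7 : e (bL 6) = ⁅e (bL 0), e (bL 5)⁆ := by rw [← hb05, LieEquiv.map_lie]
  have hbL5ne : e (bL 5) ≠ 0 := by
    intro h
    have h2 := congrArg e.symm h
    rw [LieEquiv.symm_apply_apply, hsym0] at h2
    exact bL.ne_zero 5 h2
  have c3_0 : bM.repr (e (bL 2)) 0 = 0 := by rw [hf3]; exact gen0 bM mu hM _ _
  have c3_1 : bM.repr (e (bL 2)) 1 = 0 := by rw [hf3]; exact gen1 bM mu hM _ _
  have c4_0 : bM.repr (e (bL 3)) 0 = 0 := by rw [hf4]; exact gen0 bM mu hM _ _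
  have c4_1 : bM.repr (e (bL 3)) 1 = 0 := by rw [hf4]; exact gen1 bM mu hM _ _
  have c5_0 : bM.repr (e (bL 4)) 0 = 0 := by rw [hf5]; exact gen0 bM mu hM _ _
  have c5_1 : bM.repr (e (bL 4)) 1 = 0 := by rw [hf5]; exact gen1 bM mu hM _ _
  have c6_0 : bM.repr (e (bL 5)) 0 = 0 := by rw [hf6]; exact gen0 bM mu hM _ _
  have c6_1 : bM.repr (e (bL 5)) 1 = 0 := by rw [hf6]; exact gen1 bM mu hM _ _
  -- Step 2 : bM.repr (e (bL 0)) 0 ≠ 0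
  have ha0ne : bM.repr (e (bL 0)) 0 ≠ 0 := by
    intro ha0
    have m3_2 : bM.repr (e (bL 2)) 2 = 0 := by
      rw [hf3, gen2 bM mu hM, ha0, hβ0]; ring
    have m4_2 : bM.repr (e (bL 3)) 2 = 0 := by
      rw [hf4, gen2 bM mu hM, c3_0, c3_1]; ring
    have m4_3 : bM.repr (e (bL 3)) 3 = 0 := by
      rw [hf4, gen3 bM mu hM, ha0, c3_0]; ring
    have m5_2 : bM.repr (e (bL 4)) 2 = 0 := by
      rw [hf5, gen2 bM mu hM, c4_0, c4_1]; ring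
    have m5_3 : bM.repr (e (bL 4)) 3 = 0 := by
      rw [hf5, gen3 bM mu hM, ha0, c4_0]; ring
    have m5_4 : bM.repr (e (bL 4)) 4 = 0 := by
      rw [hf5, gen4 bM mu hM, ha0, c4_0, c4_1, m4_2]; ring
    have m5_5 : bM.repr (e (bL 4)) 5 = 0 := by
      rw [hf5, gen5 bM mu hM, ha0, c4_0, c4_1, m4_3]; ring
    apply hbL5ne
    rw [Module.Basis.ext_elem_iff bM]
    intro i
    simp only [map_zero, Finsupp.coe_zero, Pi.zero_apply]
    fin_cases i
    · exact c6_0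
    · exact c6_1
    · show bM.repr (e (bL 5)) 2 = 0
      rw [hf6, gen2 bM mu hM, c5_0, c5_1]; ring
    · show bM.repr (e (bL 5)) 3 = 0
      rw [hf6, gen3 bM mu hM, ha0, c5_0]; ring
    · show bM.repr (e (bL 5)) 4 = 0
      rw [hf6, gen4 bM mu hM, ha0, c5_0, c5_1, m5_2]; ring
    · show bM.repr (e (bL 5)) 5 = 0
      rw [hf6, gen5 bM mu hM, ha0, c5_0, c5_1, m5_3]; ring
    · show bM.repr (e (bL 5)) 6 = 0
      rw [hf6, gen6 bM mu hM, ha0, c5_0, c5_1, m5_2, m5_3, m5_4, m5_5]; ring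
  -- Step 3 : bM.repr (e (bL 1)) 1 ≠ 0
  have hb1ne : bM.repr (e (bL 1)) 1 ≠ 0 := by
    intro hb1
    have hm236 : ⁅⁅e (bL 1), ⁅e (bL 1), e (bL 0)⁆⁆, e (bL 0)⁆ = e (bL 5) := by
      have h := congrArg e h236
      simpa only [LieEquiv.map_lie] using h
    have t1_0 : bM.repr ⁅e (bL 1), e (bL 0)⁆ 0 = 0 := gen0 bM mu hM _ _
    have t1_1 : bM.repr ⁅e (bL 1), e (bL 0)⁆ 1 = 0 := gen1 bM mu hM _ _
    have t2_0 : bM.repr ⁅e (bL 1), ⁅e (bL 1), e (bL 0)⁆⁆ 0 = 0 := gen0 bM mu hM _ _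
    have t2_1 : bM.repr ⁅e (bL 1), ⁅e (bL 1), e (bL 0)⁆⁆ 1 = 0 := gen1 bM mu hM _ _
    have t2_2 : bM.repr ⁅e (bL 1), ⁅e (bL 1), e (bL 0)⁆⁆ 2 = 0 := by
      rw [gen2 bM mu hM, t1_0, t1_1]; ring
    have t2_3 : bM.repr ⁅e (bL 1), ⁅e (bL 1), e (bL 0)⁆⁆ 3 = 0 := by
      rw [gen3 bM mu hM, hβ0, t1_0]; ring
    have t2_4 : bM.repr ⁅e (bL 1), ⁅e (bL 1), e (bL 0)⁆⁆ 4 = 0 := by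
      rw [gen4 bM mu hM, hβ0, hb1, t1_0, t1_1]; ring
    have t2_5 : bM.repr ⁅e (bL 1), ⁅e (bL 1), e (bL 0)⁆⁆ 5 = 0 := by
      rw [gen5 bM mu hM, hβ0, hb1, t1_0, t1_1]; ring
    apply hbL5ne
    rw [Module.Basis.ext_elem_iff bM]
    intro i
    simp only [map_zero, Finsupp.coe_zero, Pi.zero_apply]
    rw [← hm236]
    fin_cases i
    · exact gen0 bM mu hM _ _
    · exact gen1 bM mu hM _ _
    · show bM.repr ⁅⁅e (bL 1), ⁅e (bL 1), e (bL 0)⁆⁆, e (bL 0)⁆ 2 = 0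
      rw [gen2 bM mu hM, t2_0, t2_1]; ring
    · show bM.repr ⁅⁅e (bL 1), ⁅e (bL 1), e (bL 0)⁆⁆, e (bL 0)⁆ 3 = 0
      rw [gen3 bM mu hM, t2_0, t2_2]; ring
    · show bM.repr ⁅⁅e (bL 1), ⁅e (bL 1), e (bL 0)⁆⁆, e (bL 0)⁆ 4 = 0
      rw [gen4 bM mu hM, t2_0, t2_1, t2_2, t2_3]; ring
    · show bM.repr ⁅⁅e (bL 1), ⁅e (bL 1), e (bL 0)⁆⁆, e (bL 0)⁆ 5 = 0
      rw [gen5 bM mu hM, t2_0, t2_1, t2_3, t2_4]; ring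
    · show bM.repr ⁅⁅e (bL 1), ⁅e (bL 1), e (bL 0)⁆⁆, e (bL 0)⁆ 6 = 0
      rw [gen6 bM mu hM, t2_0, t2_1, t2_2, t2_3, t2_4, t2_5]; ring
  -- Step 4 : the two key polynomial relations
  have c32 : bM.repr (e (bL 2)) 2 = bM.repr (e (bL 0)) 0 * bM.repr (e (bL 1)) 1 := by
    rw [hf3, gen2 bM mu hM, hβ0]; ring
  have c42 : bM.repr (e (bL 3)) 2 = 0 := by
    rw [hf4, gen2 bM mu hM, c3_0, c3_1]; ring
  have c43 : bM.repr (e (bL 3)) 3 = bM.repr (e (bL 0)) 0 ^ 2 * bM.repr (e (bL 1)) 1 := by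
    rw [hf4, gen3 bM mu hM, c3_0, c32]; ring
  have c52 : bM.repr (e (bL 4)) 2 = 0 := by
    rw [hf5, gen2 bM mu hM, c4_0, c4_1]; ring
  have c53 : bM.repr (e (bL 4)) 3 = 0 := by
    rw [hf5, gen3 bM mu hM, c4_0, c42]; ring
  have c54 : bM.repr (e (bL 4)) 4 = bM.repr (e (bL 0)) 0 ^ 3 * bM.repr (e (bL 1)) 1 := by
    rw [hf5, gen4 bM mu hM, c4_0, c4_1, c42, c43]; ring
  have hR3 : ⁅e (bL 1), e (bL 2)⁆ = e (bL 4) := by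
    have h := congrArg e h1_2
    simpa only [LieEquiv.map_lie] using h
  have eq1 : bM.repr (e (bL 0)) 0 ^ 3 * bM.repr (e (bL 1)) 1
      = bM.repr (e (bL 1)) 1 * (bM.repr (e (bL 0)) 0 * bM.repr (e (bL 1)) 1) := by
    have h : bM.repr ⁅e (bL 1), e (bL 2)⁆ 4
        = bM.repr (e (bL 1)) 1 * (bM.repr (e (bL 0)) 0 * bM.repr (e (bL 1)) 1) := by
      rw [gen4 bM mu hM, hβ0, c3_0, c3_1, c32]; ring
    rw [hR3, c54] at h
    exact h
  have c65 : bM.repr (e (bL 5)) 5 = bM.repr (e (bL 0)) 0 ^ 4 * bM.repr (e (bL 1)) 1 := by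
    rw [hf6, gen5 bM mu hM, c5_0, c5_1, c53, c54]; ring
  have c64 : bM.repr (e (bL 5)) 4 = 0 := by
    rw [hf6, gen4 bM mu hM, c5_0, c5_1, c52, c53]; ring
  have c63 : bM.repr (e (bL 5)) 3 = 0 := by
    rw [hf6, gen3 bM mu hM, c5_0, c52]; ring
  have c62 : bM.repr (e (bL 5)) 2 = 0 := by
    rw [hf6, gen2 bM mu hM, c5_0, c5_1]; ring
  have c76 : bM.repr (e (bL 6)) 6 = bM.repr (e (bL 0)) 0 ^ 5 * bM.repr (e (bL 1)) 1 := by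
    rw [hf7, gen6 bM mu hM, c6_0, c6_1, c62, c63, c64, c65]; ring
  have hsmul : e ((lam : Qbar) • bL 6) = (lam : Qbar) • e (bL 6) := by
    exact (e : L ≃ₗ[Qbar] M).map_smul (lam : Qbar) (bL 6)
  have hR1 : ⁅e (bL 1), e (bL 4)⁆ = (lam : Qbar) • e (bL 6) := by
    have h := congrArg e h1_4
    rw [hsmul] at h
    simpa only [LieEquiv.map_lie] using h
  have eq2 : (lam : Qbar) * (bM.repr (e (bL 0)) 0 ^ 5 * bM.repr (e (bL 1)) 1)
      = (mu : Qbar) * (bM.repr (e (bL 1)) 1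
          * (bM.repr (e (bL 0)) 0 ^ 3 * bM.repr (e (bL 1)) 1)) := by
    have h : bM.repr ⁅e (bL 1), e (bL 4)⁆ 6
        = (mu : Qbar) * (bM.repr (e (bL 1)) 1
            * (bM.repr (e (bL 0)) 0 ^ 3 * bM.repr (e (bL 1)) 1)) := by
      rw [gen6 bM mu hM, hβ0, c5_0, c5_1, c52, c53, c54]; ring
    rw [hR1] at h
    rw [← h, map_smul, Finsupp.smul_apply, c76, smul_eq_mul]
  -- finish
  have hv1 : bM.repr (e (bL 1)) 1 = bM.repr (e (bL 0)) 0 ^ 2 := by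
    have h : (bM.repr (e (bL 0)) 0 * bM.repr (e (bL 1)) 1) * bM.repr (e (bL 1)) 1
        = (bM.repr (e (bL 0)) 0 * bM.repr (e (bL 1)) 1) * bM.repr (e (bL 0)) 0 ^ 2 := by
      linear_combination -eq1
    exact mul_left_cancel₀ (mul_ne_zero ha0ne hb1ne) h
  have hfin : (mu : Qbar) * bM.repr (e (bL 0)) 0 ^ 7
      = (lam : Qbar) * bM.repr (e (bL 0)) 0 ^ 7 := by
    rw [hv1] at eq2
    linear_combination -eq2
  have hcast : (mu : Qbar) = (lam : Qbar) :=
    mul_right_cancel₀ (pow_ne_zero 7 ha0ne) hfin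
  exact_mod_cast hcast.symm
end
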